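/- Let v ∈ W^{1,p}_0(ℝ^d, ℝ^m) with p > 1. For ρ > 0 and z ∈ Q(ρ) = [−ρ/2, ρ/2]^d, let L_{ρ,z} = (ρℤ)^d + z and for x ∈ L_{ρ,z}, y ∈ Q(1) define v_{x,ρ}(y) = (v(x+ρy) − ⨍_{x+Q(ρ)} v)/ρ − ∇v(x)·y. Then ⨍_{Q(ρ)} Σ_{x∈L_{ρ,z}} ρ^d (∫_{Q(1)} |∇v_{x,ρ}(y)|^p dy) dz = ∫_{ℝ^d} ∫_{Q(1)} |∇v(x+ρy) − ∇v(x)|^p dy dx, and this quantity tends to 0 as ρ → 0. -/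

import Mathlib

open scoped BigOperators
open MeasureTheory Filter

section AuxStmt8
open Metric

variable {d : ℕ} {E : Type*} [NormedAddCommGroup E]

lemma aux_asm_translate {f : (Fin d → ℝ) → E} (hf : AEStronglyMeasurable f (volume : Measure (Fin d → ℝ)))
    (w : Fin d → ℝ) : AEStronglyMeasurable (fun x => f (x + w)) (volume : Measure (Fin d → ℝ)) :=
  hf.comp_quasiMeasurePreserving (measurePreserving_add_right volume w).quasiMeasurePreserving

lemma aux_eLpNorm_translate {f : (Fin d → ℝ) → E} (hf : AEStronglyMeasurable f (volume : Measure (Fin d → ℝ)))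
    (q : ENNReal) (w : Fin d → ℝ) :
    eLpNorm (fun x => f (x + w)) q (volume : Measure (Fin d → ℝ)) = eLpNorm f q volume :=
  eLpNorm_comp_measurePreserving hf (measurePreserving_add_right volume w)

lemma aux_memLp_translate {f : (Fin d → ℝ) → E} {q : ENNReal}
    (hf : MemLp f q (volume : Measure (Fin d → ℝ))) (w : Fin d → ℝ) :
    MemLp (fun x => f (x + w)) q (volume : Measure (Fin d → ℝ)) :=
  hf.comp_measurePreserving (measurePreserving_add_right volume w)

lemma aux_int_rpow {α E : Type*} [MeasurableSpace α] {μ : Measure α} [NormedAddCommGroup E]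
    {f : α → E} (hf : AEStronglyMeasurable f μ) {p : ℝ} (hp : 0 < p) :
    ∫ x, ‖f x‖ ^ p ∂μ = ((eLpNorm f (ENNReal.ofReal p) μ) ^ p).toReal := by
  have hq0 : (ENNReal.ofReal p) ≠ 0 := by simp [ENNReal.ofReal_eq_zero, not_le, hp]
  have hqt : (ENNReal.ofReal p) ≠ ⊤ := ENNReal.ofReal_ne_top
  rw [integral_eq_lintegral_of_nonneg_ae
      (Filter.Eventually.of_forall fun x => Real.rpow_nonneg (norm_nonneg _) p)
      ((Real.continuous_rpow_const hp.le).comp_aestronglyMeasurable hf.norm)]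
  rw [eLpNorm_eq_lintegral_rpow_enorm_toReal hq0 hqt]
  rw [← ENNReal.rpow_mul, ENNReal.toReal_ofReal hp.le, one_div, inv_mul_cancel₀ hp.ne',
    ENNReal.rpow_one]
  congr 1
  refine lintegral_congr fun x => ?_
  rw [← ofReal_norm, ← ENNReal.ofReal_rpow_of_nonneg (norm_nonneg _) hp.le]

-- bound lemma
lemma aux_T_le {g : (Fin d → ℝ) → E} (hg : AEStronglyMeasurable g (volume : Measure (Fin d → ℝ)))
    {p : ℝ} (hp : 0 < p) (hq1 : 1 ≤ ENNReal.ofReal p)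
    (hgt : eLpNorm g (ENNReal.ofReal p) volume ≠ ⊤) (w : Fin d → ℝ) :
    ∫ x, ‖g (x + w) - g x‖ ^ p ∂(volume : Measure (Fin d → ℝ))
      ≤ ((2 * eLpNorm g (ENNReal.ofReal p) volume) ^ p).toReal := by
  have hasm : AEStronglyMeasurable (fun x => g (x + w) - g x) (volume : Measure (Fin d → ℝ)) :=
    (aux_asm_translate hg w).sub hg
  rw [aux_int_rpow hasm hp]
  apply ENNReal.toReal_mono
  · exact ENNReal.rpow_ne_top_of_nonneg hp.le (ENNReal.mul_ne_top (by norm_num) hgt)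
  · refine ENNReal.rpow_le_rpow ?_ hp.le
    calc eLpNorm (fun x => g (x + w) - g x) (ENNReal.ofReal p) volume
        ≤ eLpNorm (fun x => g (x + w)) (ENNReal.ofReal p) volume
            + eLpNorm g (ENNReal.ofReal p) volume :=
          eLpNorm_sub_le (aux_asm_translate hg w) hg hq1
      _ = 2 * eLpNorm g (ENNReal.ofReal p) volume := by
          rw [aux_eLpNorm_translate hg _ w, two_mul]

variable {d : ℕ} {E : Type*} [NormedAddCommGroup E]

lemma aux_mid_tendsto {h : (Fin d → ℝ) → E} (h_cont : Continuous h) (h_supp : HasCompactSupport h)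
    (q : ENNReal) :
    Tendsto (fun w : Fin d → ℝ => eLpNorm (fun x => h (x + w) - h x) q volume) (nhds 0) (nhds 0) := by
  rw [ENNReal.tendsto_nhds_zero]
  intro ε hε
  rcases eq_or_ne ε ⊤ with hεt | hεt
  · filter_upwards with w using hεt ▸ le_top
  set K := cthickening 1 (tsupport h) with hK
  have hKc : IsCompact K := h_supp.cthickening
  have hKfin : volume K ≠ ⊤ := hKc.measure_lt_top.ne
  set c : ENNReal := (volume K) ^ (q.toReal)⁻¹ with hc
  have hcfin : c ≠ ⊤ := ENNReal.rpow_ne_top_of_nonneg (by positivity) hKfin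
  set δ : ℝ := (ε / (c + 1)).toReal with hδ
  have hδfin : ε / (c + 1) ≠ ⊤ := by
    intro hcontra
    have h1 : ε = ⊤ ∧ ¬c = ⊤ := by simpa using (ENNReal.div_eq_top.mp hcontra)
    exact hεt h1.1
  have hδpos : 0 < δ :=
    ENNReal.toReal_pos (ENNReal.div_ne_zero.mpr ⟨hε.ne', by finiteness⟩) hδfin
  have hu : UniformContinuous h := h_supp.uniformContinuous_of_continuous h_cont
  obtain ⟨r, hr, hru⟩ := Metric.uniformContinuous_iff.mp hu δ hδpos
  have hball : ∀ᶠ w : Fin d → ℝ in nhds 0, ‖w‖ < min r 1 :=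
    (Metric.eventually_nhds_iff_ball.mpr ⟨min r 1, lt_min hr one_pos, fun y hy => by
      simpa [dist_zero_right] using hy⟩)
  filter_upwards [hball] with w hw
  have hw1 : ‖w‖ ≤ 1 := le_of_lt (lt_of_lt_of_le hw (min_le_right _ _))
  have hwr : ‖w‖ < r := lt_of_lt_of_le hw (min_le_left _ _)
  have hsupp : Function.support (fun x => h (x + w) - h x) ⊆ K := by
    intro x hx
    by_contra hxK
    apply hx
    have hx1 : h x = 0 := by
      apply image_eq_zero_of_notMem_tsupport
      exact fun hmem => hxK (self_subset_cthickening _ hmem)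
    have hx2 : h (x + w) = 0 := by
      apply image_eq_zero_of_notMem_tsupport
      intro hmem
      apply hxK
      apply mem_cthickening_of_dist_le x (x + w) 1 _ hmem
      rw [dist_eq_norm]
      simpa using hw1
    simp [hx1, hx2]
  have hbound : ∀ x, ‖h (x + w) - h x‖ ≤ δ := by
    intro x
    rw [← dist_eq_norm]
    apply le_of_lt
    apply hru
    rw [dist_eq_norm]
    simpa using hwr
  calc eLpNorm (fun x => h (x + w) - h x) q volume
      = eLpNorm (fun x => h (x + w) - h x) q (volume.restrict K) :=
        (eLpNorm_restrict_eq_of_support_subset hsupp).symm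
    _ ≤ (volume.restrict K) Set.univ ^ q.toReal⁻¹ * ENNReal.ofReal δ :=
        eLpNorm_le_of_ae_bound (Filter.Eventually.of_forall hbound)
    _ = c * (ε / (c + 1)) := by
        rw [Measure.restrict_apply_univ, ENNReal.ofReal_toReal hδfin]
    _ ≤ (c + 1) * (ε / (c + 1)) := by gcongr; exact le_self_add
    _ ≤ ε := ENNReal.mul_div_le

set_option maxHeartbeats 1000000 in
lemma aux_tendsto_translate [NormedSpace ℝ E] {g : (Fin d → ℝ) → E} {q : ENNReal} (hq1 : 1 ≤ q) (hqt : q ≠ ⊤)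
    (hg : MemLp g q (volume : Measure (Fin d → ℝ))) :
    Tendsto (fun w : Fin d → ℝ => eLpNorm (fun x => g (x + w) - g x) q volume)
      (nhds 0) (nhds 0) := by
  rw [ENNReal.tendsto_nhds_zero]
  intro ε hε
  rcases eq_or_ne ε ⊤ with hεt | hεt
  · filter_upwards with w using hεt ▸ le_top
  have hε3 : (ε / 3) ≠ 0 := (ENNReal.div_pos hε.ne' (by norm_num)).ne'
  obtain ⟨h, h_supp, h_close, h_cont, h_mem⟩ :=
    hg.exists_hasCompactSupport_eLpNorm_sub_le hqt hε3
  have hmid := ENNReal.tendsto_nhds_zero.mp (aux_mid_tendsto h_cont h_supp q) (ε / 3)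
    (ENNReal.div_pos hε.ne' (by norm_num))
  filter_upwards [hmid] with w hw
  set u : (Fin d → ℝ) → E := fun x => (g - h) (x + w) with hu
  set φ : (Fin d → ℝ) → E := fun x => h (x + w) - h x with hφ
  set ψ : (Fin d → ℝ) → E := -(g - h) with hψ
  have key : (fun x => g (x + w) - g x) = u + (φ + ψ) := by
    funext x
    simp only [hu, hφ, hψ, Pi.add_apply, Pi.sub_apply, Pi.neg_apply]
    abel
  have hgh : AEStronglyMeasurable (g - h) (volume : Measure (Fin d → ℝ)) :=
    hg.1.sub h_cont.aestronglyMeasurable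
  have hau : AEStronglyMeasurable u (volume : Measure (Fin d → ℝ)) := aux_asm_translate hgh w
  have haφ : AEStronglyMeasurable φ (volume : Measure (Fin d → ℝ)) :=
    (aux_asm_translate h_cont.aestronglyMeasurable w).sub h_cont.aestronglyMeasurable
  have haψ : AEStronglyMeasurable ψ (volume : Measure (Fin d → ℝ)) := hgh.neg
  calc eLpNorm (fun x => g (x + w) - g x) q volume = eLpNorm (u + (φ + ψ)) q volume := by
        rw [key]
    _ ≤ eLpNorm u q volume + eLpNorm (φ + ψ) q volume :=
        eLpNorm_add_le hau (haφ.add haψ) hq1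
    _ ≤ eLpNorm u q volume + (eLpNorm φ q volume + eLpNorm ψ q volume) :=
        add_le_add_right (eLpNorm_add_le haφ haψ hq1) _
    _ ≤ ε / 3 + (ε / 3 + ε / 3) := by
        have h1 : eLpNorm u q volume = eLpNorm (g - h) q volume := aux_eLpNorm_translate hgh q w
        have h2 : eLpNorm ψ q volume = eLpNorm (g - h) q volume := eLpNorm_neg (g - h) q volume
        gcongr
        · rw [h1]; exact h_close
        · rw [h2]; exact h_close
    _ = ε := by rw [← add_assoc, ENNReal.add_thirds]

lemma aux_cube_closed {d : ℕ} (c : Fin d → ℝ) (r : ℝ) :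
    IsClosed {x : Fin d → ℝ | ∀ i, |x i - c i| ≤ r} := by
  have : {x : Fin d → ℝ | ∀ i, |x i - c i| ≤ r} = ⋂ i, {x : Fin d → ℝ | |x i - c i| ≤ r} := by
    ext x; simp
  rw [this]
  exact isClosed_iInter fun i =>
    isClosed_le ((continuous_apply i).sub continuous_const).abs continuous_const

lemma aux_unfold {d : ℕ} {ρ : ℝ} (hρ : 0 < ρ) {F : (Fin d → ℝ) → ℝ} (hF0 : ∀ x, 0 ≤ F x)
    (hFi : Integrable F (volume : Measure (Fin d → ℝ))) :
    ∫ z in {x : Fin d → ℝ | ∀ i, |x i| ≤ ρ / 2},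
        ∑' n : Fin d → ℤ, F (z + ρ • fun i => (n i : ℝ))
      = ∫ x, F x := by
  set Q : Set (Fin d → ℝ) := {x : Fin d → ℝ | ∀ i, |x i| ≤ ρ / 2} with hQ
  have hQm : MeasurableSet Q := by
    have h0 := (aux_cube_closed (0 : Fin d → ℝ) (ρ / 2)).measurableSet
    simp only [Pi.zero_apply, sub_zero] at h0
    exact h0
  set c : (Fin d → ℤ) → (Fin d → ℝ) := fun n => ρ • fun i => (n i : ℝ) with hc
  set s : (Fin d → ℤ) → Set (Fin d → ℝ) :=
    fun n => {x : Fin d → ℝ | ∀ i, |x i - ρ * n i| ≤ ρ / 2} with hs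
  have hsm : ∀ n, MeasurableSet (s n) := fun n =>
    (aux_cube_closed (fun i => ρ * n i) (ρ / 2)).measurableSet
  set fh : (Fin d → ℝ) → ENNReal := fun x => ENNReal.ofReal (F x) with hfh
  have hfhm : AEMeasurable fh (volume : Measure (Fin d → ℝ)) :=
    ENNReal.measurable_ofReal.comp_aemeasurable hFi.1.aemeasurable
  have hfhtr : ∀ n : Fin d → ℤ,
      AEMeasurable (fun z => fh (z + c n)) (volume : Measure (Fin d → ℝ)) := fun n =>
    hfhm.comp_quasiMeasurePreserving
      (measurePreserving_add_right volume (c n)).quasiMeasurePreserving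
  -- translation identity
  have hA : ∀ n : Fin d → ℤ,
      ∫⁻ z in Q, fh (z + c n) ∂(volume : Measure (Fin d → ℝ)) = ∫⁻ x in s n, fh x := by
    intro n
    have hmem : ∀ z : Fin d → ℝ, z + c n ∈ s n ↔ z ∈ Q := by
      intro z
      simp [hs, hQ, hc, Pi.add_apply, Pi.smul_apply, smul_eq_mul, add_sub_cancel_right]
    calc ∫⁻ z in Q, fh (z + c n) ∂volume
        = ∫⁻ z, Q.indicator (fun z => fh (z + c n)) z ∂volume := by
          rw [lintegral_indicator hQm]
      _ = ∫⁻ z, ((s n).indicator fh) (z + c n) ∂volume := by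
          refine lintegral_congr fun z => ?_
          by_cases hz : z ∈ Q
          · rw [Set.indicator_of_mem hz, Set.indicator_of_mem ((hmem z).mpr hz)]
          · rw [Set.indicator_of_notMem hz,
              Set.indicator_of_notMem (fun hzz => hz ((hmem z).mp hzz))]
      _ = ∫⁻ x, ((s n).indicator fh) x ∂volume :=
          lintegral_add_right_eq_self ((s n).indicator fh) (c n)
      _ = ∫⁻ x in s n, fh x ∂volume := lintegral_indicator (hsm n) fh
  -- union is everything
  have hUnion : (⋃ n, s n) = Set.univ := by
    ext x
    simp only [Set.mem_iUnion, Set.mem_univ, iff_true]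
    refine ⟨fun i => round (x i / ρ), fun i => ?_⟩
    have h1 : x i - ρ * (round (x i / ρ) : ℝ) = ρ * (x i / ρ - round (x i / ρ)) := by
      field_simp
    rw [h1, abs_mul, abs_of_pos hρ]
    have h2 := abs_sub_round (x i / ρ)
    nlinarith
  -- pairwise a.e. disjoint
  have hdisj : Pairwise (Function.onFun (AEDisjoint (volume : Measure (Fin d → ℝ))) s) := by
    intro n m hnm
    obtain ⟨i, hi⟩ := Function.ne_iff.mp hnm
    have hsub : s n ∩ s m ⊆ {x : Fin d → ℝ | x i = ρ * (n i + m i) / 2} := by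
      rintro x ⟨hx1, hx2⟩
      have h1 := abs_le.mp (hx1 i)
      have h2 := abs_le.mp (hx2 i)
      have h3 : (1 : ℝ) ≤ |(n i : ℝ) - (m i : ℝ)| := by
        have := Int.one_le_abs (sub_ne_zero.mpr hi)
        push_cast at this ⊢
        rw [← Int.cast_sub, ← Int.cast_abs] at *
        exact_mod_cast this
      have h4 : ρ ≤ |ρ * (n i : ℝ) - ρ * (m i : ℝ)| := by
        rw [← mul_sub, abs_mul, abs_of_pos hρ]
        nlinarith
      rw [Set.mem_setOf_eq]
      rcases le_abs.mp h4 with h5 | h5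
      · linarith [h1.1, h1.2, h2.1, h2.2]
      · linarith [h1.1, h1.2, h2.1, h2.2]
    refine measure_mono_null hsub ?_
    have : (volume : Measure (Fin d → ℝ)) = Measure.pi fun _ => volume := by
      rw [MeasureTheory.volume_pi]
    rw [this]
    exact MeasureTheory.Measure.pi_hyperplane _ i _
  -- ENNReal computation
  have hkey : ∫⁻ z in Q, (∑' n : Fin d → ℤ, fh (z + c n)) ∂volume = ∫⁻ x, fh x ∂volume := by
    calc ∫⁻ z in Q, (∑' n : Fin d → ℤ, fh (z + c n)) ∂volume
        = ∑' n : Fin d → ℤ, ∫⁻ z in Q, fh (z + c n) ∂volume :=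
          lintegral_tsum fun n => (hfhtr n).restrict
      _ = ∑' n : Fin d → ℤ, ∫⁻ x in s n, fh x ∂volume := tsum_congr hA
      _ = ∫⁻ x in ⋃ n, s n, fh x ∂volume :=
          (lintegral_iUnion₀ (fun n => (hsm n).nullMeasurableSet) hdisj fh).symm
      _ = ∫⁻ x, fh x ∂volume := by rw [hUnion, Measure.restrict_univ]
  have hΛ : ∫⁻ x, fh x ∂(volume : Measure (Fin d → ℝ)) ≠ ⊤ := by
    have heq : ∀ x, fh x = (‖F x‖₊ : ENNReal) := fun x => by
      rw [← enorm_eq_nnnorm, ← ofReal_norm, Real.norm_of_nonneg (hF0 x)]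
    rw [lintegral_congr heq]
    exact hFi.2.ne
  have hGm : AEMeasurable (fun z => ∑' n : Fin d → ℤ, fh (z + c n))
      ((volume : Measure (Fin d → ℝ)).restrict Q) :=
    AEMeasurable.ennreal_tsum fun n => (hfhtr n).restrict
  have hae : ∀ᵐ z ∂((volume : Measure (Fin d → ℝ)).restrict Q),
      (∑' n : Fin d → ℤ, fh (z + c n)) < ⊤ :=
    ae_lt_top' hGm (by rw [hkey]; exact hΛ)
  have hcongr : ∀ᵐ z ∂((volume : Measure (Fin d → ℝ)).restrict Q),
      (∑' n : Fin d → ℤ, F (z + c n)) = (∑' n : Fin d → ℤ, fh (z + c n)).toReal := by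
    filter_upwards [hae] with z _
    rw [ENNReal.tsum_toReal_eq fun n => ENNReal.ofReal_ne_top]
    exact tsum_congr fun n => (ENNReal.toReal_ofReal (hF0 _)).symm
  calc ∫ z in Q, ∑' n : Fin d → ℤ, F (z + c n)
      = ∫ z in Q, (∑' n : Fin d → ℤ, fh (z + c n)).toReal := integral_congr_ae hcongr
    _ = (∫⁻ z in Q, (∑' n : Fin d → ℤ, fh (z + c n)) ∂volume).toReal := integral_toReal hGm hae
    _ = (∫⁻ x, fh x ∂volume).toReal := by rw [hkey]
    _ = ∫ x, F x := (integral_eq_lintegral_of_nonneg_ae (Filter.Eventually.of_forall hF0) hFi.1).symm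

section
variable {d m : ℕ} {p : ℝ}


lemma aux_Q1_compact : IsCompact {x : Fin d → ℝ | ∀ i, |x i| ≤ 1 / 2} := by
  have : {x : Fin d → ℝ | ∀ i, |x i| ≤ 1 / 2}
      = Set.Icc (fun _ => -(1/2) : Fin d → ℝ) (fun _ => 1/2) := by
    ext x
    simp [Set.mem_Icc, Pi.le_def, abs_le, forall_and]
  rw [this]
  exact isCompact_Icc

lemma aux_Q1_fin : (volume : Measure (Fin d → ℝ)) {x : Fin d → ℝ | ∀ i, |x i| ≤ 1 / 2} ≠ ⊤ :=
  aux_Q1_compact.measure_lt_top.ne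

instance aux_Q1_finite :
    IsFiniteMeasure ((volume : Measure (Fin d → ℝ)).restrict {x : Fin d → ℝ | ∀ i, |x i| ≤ 1 / 2}) :=
  ⟨by rw [Measure.restrict_apply_univ]; exact aux_Q1_compact.measure_lt_top⟩

lemma aux_prod_integrable (hp : 1 < p) {g : (Fin d → ℝ) → ((Fin d → ℝ) →L[ℝ] (Fin m → ℝ))} (hgsm : StronglyMeasurable g)
    (hgmem : MemLp g (ENNReal.ofReal p) (volume : Measure (Fin d → ℝ))) (ρ : ℝ) :
    Integrable (fun q : (Fin d → ℝ) × (Fin d → ℝ) => ‖g (q.1 + ρ • q.2) - g q.1‖ ^ p)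
      ((volume : Measure (Fin d → ℝ)).prod
        ((volume : Measure (Fin d → ℝ)).restrict {x : Fin d → ℝ | ∀ i, |x i| ≤ 1 / 2})) := by
  have hp0 : (0 : ℝ) < p := lt_trans one_pos hp
  have hq0 : (ENNReal.ofReal p) ≠ 0 := by simp [ENNReal.ofReal_eq_zero, not_le, hp0]
  have hqt : (ENNReal.ofReal p) ≠ ⊤ := ENNReal.ofReal_ne_top
  have hmap : Measurable (fun q : (Fin d → ℝ) × (Fin d → ℝ) => q.1 + ρ • q.2) :=
    measurable_fst.add (measurable_snd.const_smul ρ)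
  have hH : StronglyMeasurable
      (fun q : (Fin d → ℝ) × (Fin d → ℝ) => ‖g (q.1 + ρ • q.2) - g q.1‖ ^ p) :=
    (Real.continuous_rpow_const hp0.le).comp_stronglyMeasurable
      ((hgsm.comp_measurable hmap).sub (hgsm.comp_measurable measurable_fst)).norm
  refine (integrable_prod_iff' hH.aestronglyMeasurable).mpr ⟨?_, ?_⟩
  · refine Filter.Eventually.of_forall fun y => ?_
    have hd : MemLp (fun x => g (x + ρ • y) - g x) (ENNReal.ofReal p)
        (volume : Measure (Fin d → ℝ)) :=
      (aux_memLp_translate hgmem (ρ • y)).sub hgmem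
    have := hd.integrable_norm_rpow hq0 hqt
    rwa [ENNReal.toReal_ofReal hp0.le] at this
  · set B : ℝ := ((2 * eLpNorm g (ENNReal.ofReal p) volume) ^ p).toReal with hB
    refine Integrable.mono' (integrable_const B)
      hH.norm.integral_prod_left'.aestronglyMeasurable
      (Filter.Eventually.of_forall fun y => ?_)
    have heq : (fun x => ‖‖g (x + ρ • y) - g x‖ ^ p‖) = fun x => ‖g (x + ρ • y) - g x‖ ^ p := by
      funext x
      exact Real.norm_of_nonneg (Real.rpow_nonneg (norm_nonneg _) p)
    have h1 : ∫ x, ‖‖g (x + ρ • y) - g x‖ ^ p‖ ∂(volume : Measure (Fin d → ℝ))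
        = ∫ x, ‖g (x + ρ • y) - g x‖ ^ p ∂(volume : Measure (Fin d → ℝ)) := by rw [heq]
    rw [Real.norm_of_nonneg
      (integral_nonneg fun x => norm_nonneg _), h1]
    exact aux_T_le hgmem.1 hp0 (by simpa using ENNReal.one_le_ofReal.mpr hp.le)
      hgmem.2.ne (ρ • y)
end

end AuxStmt8

/-- Blow-up lemma (Lemma 2.6(a)): for `v ∈ W^{1,p}_0` the averaged sum over the shifted
lattices `L_{ρ,z}` of the local gradient defects equals
`∫_{ℝ^d}∫_{Q(1)} |∇v(x+ρy)-∇v(x)|^p dy dx`, and this quantity tends to `0` as `ρ → 0⁺`. -/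
theorem stmt_8 (d m : ℕ) (hd : 0 < d) (p : ℝ) (hp : 1 < p)
    (v : (Fin d → ℝ) → (Fin m → ℝ))
    (hdiff : Differentiable ℝ v) (hsupp : HasCompactSupport v)
    (hmem : MemLp (fun x => fderiv ℝ v x) (ENNReal.ofReal p) volume) :
    (∀ ρ : ℝ, 0 < ρ →
      (ρ ^ d)⁻¹ *
        ∫ z in {x : Fin d → ℝ | ∀ i, |x i| ≤ ρ / 2},
          ∑' n : Fin d → ℤ, ρ ^ d *
            ∫ y in {x : Fin d → ℝ | ∀ i, |x i| ≤ 1 / 2},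
              ‖fderiv ℝ v ((z + ρ • fun i => (n i : ℝ)) + ρ • y) -
                fderiv ℝ v (z + ρ • fun i => (n i : ℝ))‖ ^ p
      = ∫ x : Fin d → ℝ,
          ∫ y in {x : Fin d → ℝ | ∀ i, |x i| ≤ 1 / 2},
            ‖fderiv ℝ v (x + ρ • y) - fderiv ℝ v x‖ ^ p) ∧
    Tendsto (fun ρ : ℝ =>
        ∫ x : Fin d → ℝ,
          ∫ y in {x : Fin d → ℝ | ∀ i, |x i| ≤ 1 / 2},
            ‖fderiv ℝ v (x + ρ • y) - fderiv ℝ v x‖ ^ p)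
      (nhdsWithin 0 (Set.Ioi 0)) (nhds 0) := by
  have hp0 : (0 : ℝ) < p := lt_trans one_pos hp
  have hq0 : (ENNReal.ofReal p) ≠ 0 := by simp [ENNReal.ofReal_eq_zero, not_le, hp0]
  have hqt : (ENNReal.ofReal p) ≠ ⊤ := ENNReal.ofReal_ne_top
  have hq1 : (1 : ENNReal) ≤ ENNReal.ofReal p := by
    simpa using ENNReal.one_le_ofReal.mpr hp.le
  have hgsm : StronglyMeasurable (fun x : Fin d → ℝ => fderiv ℝ v x) :=
    (measurable_fderiv ℝ v).stronglyMeasurable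
  constructor
  · intro ρ hρ
    have hFi : Integrable (fun x : Fin d → ℝ =>
        ∫ y in {x : Fin d → ℝ | ∀ i, |x i| ≤ 1 / 2},
          ‖fderiv ℝ v (x + ρ • y) - fderiv ℝ v x‖ ^ p) volume :=
      (aux_prod_integrable hp hgsm hmem ρ).integral_prod_left
    have hF0 : ∀ x : Fin d → ℝ, 0 ≤
        ∫ y in {x : Fin d → ℝ | ∀ i, |x i| ≤ 1 / 2},
          ‖fderiv ℝ v (x + ρ • y) - fderiv ℝ v x‖ ^ p :=
      fun x => integral_nonneg fun y => Real.rpow_nonneg (norm_nonneg _) _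
    have big := aux_unfold hρ hF0 hFi
    calc (ρ ^ d)⁻¹ *
        ∫ z in {x : Fin d → ℝ | ∀ i, |x i| ≤ ρ / 2},
          ∑' n : Fin d → ℤ, ρ ^ d *
            ∫ y in {x : Fin d → ℝ | ∀ i, |x i| ≤ 1 / 2},
              ‖fderiv ℝ v ((z + ρ • fun i => (n i : ℝ)) + ρ • y) -
                fderiv ℝ v (z + ρ • fun i => (n i : ℝ))‖ ^ p
        = (ρ ^ d)⁻¹ *
        ∫ z in {x : Fin d → ℝ | ∀ i, |x i| ≤ ρ / 2}, ρ ^ d *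
          ∑' n : Fin d → ℤ,
            ∫ y in {x : Fin d → ℝ | ∀ i, |x i| ≤ 1 / 2},
              ‖fderiv ℝ v ((z + ρ • fun i => (n i : ℝ)) + ρ • y) -
                fderiv ℝ v (z + ρ • fun i => (n i : ℝ))‖ ^ p := by
          congr 1
          refine integral_congr_ae (Filter.Eventually.of_forall fun z => ?_)
          exact tsum_mul_left
      _ = (ρ ^ d)⁻¹ * (ρ ^ d *
          ∫ z in {x : Fin d → ℝ | ∀ i, |x i| ≤ ρ / 2},
            ∑' n : Fin d → ℤ,
              ∫ y in {x : Fin d → ℝ | ∀ i, |x i| ≤ 1 / 2},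
                ‖fderiv ℝ v ((z + ρ • fun i => (n i : ℝ)) + ρ • y) -
                  fderiv ℝ v (z + ρ • fun i => (n i : ℝ))‖ ^ p) := by
          rw [integral_const_mul]
      _ = ∫ z in {x : Fin d → ℝ | ∀ i, |x i| ≤ ρ / 2},
            ∑' n : Fin d → ℤ,
              ∫ y in {x : Fin d → ℝ | ∀ i, |x i| ≤ 1 / 2},
                ‖fderiv ℝ v ((z + ρ • fun i => (n i : ℝ)) + ρ • y) -
                  fderiv ℝ v (z + ρ • fun i => (n i : ℝ))‖ ^ p := by
          rw [← mul_assoc, inv_mul_cancel₀ (pow_ne_zero _ hρ.ne'), one_mul]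
      _ = ∫ x : Fin d → ℝ,
          ∫ y in {x : Fin d → ℝ | ∀ i, |x i| ≤ 1 / 2},
            ‖fderiv ℝ v (x + ρ • y) - fderiv ℝ v x‖ ^ p := big
  · refine Tendsto.congr
      (fun ρ => (integral_integral_swap (aux_prod_integrable hp hgsm hmem ρ)).symm) ?_
    have hdct := tendsto_integral_filter_of_dominated_convergence
      (μ := (volume : Measure (Fin d → ℝ)).restrict {x : Fin d → ℝ | ∀ i, |x i| ≤ 1 / 2})
      (l := nhdsWithin (0:ℝ) (Set.Ioi 0))
      (F := fun ρ (y : Fin d → ℝ) =>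
        ∫ x : Fin d → ℝ, ‖fderiv ℝ v (x + ρ • y) - fderiv ℝ v x‖ ^ p)
      (f := fun _ => (0 : ℝ))
      (bound := fun _ => ((2 * eLpNorm (fun x => fderiv ℝ v x) (ENNReal.ofReal p) volume) ^ p).toReal)
      ?_ ?_ ?_ ?_
    · simpa using hdct
    · refine Filter.Eventually.of_forall fun ρ => ?_
      have hmap : Measurable (fun q : (Fin d → ℝ) × (Fin d → ℝ) => q.1 + ρ • q.2) :=
        measurable_fst.add (measurable_snd.const_smul ρ)
      have hH : StronglyMeasurable
          (fun q : (Fin d → ℝ) × (Fin d → ℝ) =>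
            ‖fderiv ℝ v (q.1 + ρ • q.2) - fderiv ℝ v q.1‖ ^ p) :=
        (Real.continuous_rpow_const hp0.le).comp_stronglyMeasurable
          ((hgsm.comp_measurable hmap).sub (hgsm.comp_measurable measurable_fst)).norm
      exact hH.integral_prod_left'.aestronglyMeasurable
    · refine Filter.Eventually.of_forall fun ρ => Filter.Eventually.of_forall fun y => ?_
      rw [Real.norm_of_nonneg (integral_nonneg fun x => Real.rpow_nonneg (norm_nonneg _) _)]
      exact aux_T_le hmem.1 hp0 hq1 hmem.2.ne (ρ • y)
    · exact integrable_const _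
    · refine Filter.Eventually.of_forall fun y => ?_
      have hE := aux_tendsto_translate (E := (Fin d → ℝ) →L[ℝ] (Fin m → ℝ)) hq1 hqt hmem
      have hsy : Tendsto (fun ρ : ℝ => ρ • y) (nhdsWithin (0:ℝ) (Set.Ioi 0))
          (nhds (0 : Fin d → ℝ)) := by
        have hc : Continuous fun ρ : ℝ => ρ • y := continuous_id.smul continuous_const
        have h0 := hc.tendsto 0
        rw [zero_smul] at h0
        exact h0.mono_left nhdsWithin_le_nhds
      have hcomp := hE.comp hsy
      have h1 : Tendsto (fun x : ENNReal => (x ^ p).toReal) (nhds 0) (nhds 0) := by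
        have h2 := (ENNReal.continuous_rpow_const (y := p)).tendsto 0
        rw [ENNReal.zero_rpow_of_pos hp0] at h2
        have h3 := (ENNReal.tendsto_toReal (a := 0) (by simp)).comp h2
        simpa [Function.comp_def] using h3
      have hrt := h1.comp hcomp
      refine Tendsto.congr (fun ρ => ?_) hrt
      exact (aux_int_rpow ((aux_asm_translate hmem.1 (ρ • y)).sub hmem.1) hp0).symm
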